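/- Let p_1,…,p_n : ℝ^k → ℝ be continuously differentiable and L-positively homogeneous (L > 0), let ℓ be the exponential or logistic loss, 𝓛(W) = Σ_i ℓ(p_i(W)), and let W : [0,∞) → ℝ^k be a C¹ gradient flow with dW_t/dt = −∇𝓛(W_t), 𝓛(W_0) < ℓ(0). Assume ‖W_t‖ → ∞, W_t/‖W_t‖ converges to some W̄, and α(W_t)/‖W_t‖^L → a for some a > 0. Define the dual variables q_i(t) = ℓ'(p_i(W_t))/ℓ'(α(W_t)). Then: lim_t p_i(W_t)/‖W_t‖^L = p_i(W̄) exists for every i with min_i p_i(W̄) = a; and every accumulation point q̄ of {q(t) : t ∈ ℕ} lies in the probability simplex Δ_n and satisfies Σ_i q̄_i·⟨W̄, ∇p_i(W̄)⟩ = a·L; in particular q̄ is supported on the indices i minimizing p_i(W̄). -/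

import Mathlib

open Filter

open scoped RealInnerProductSpace

private lemma aux_clusterPt_eq {X ι : Type*} [TopologicalSpace X] [T2Space X] {F : Filter ι}
    {u : ι → X} {x y : X} (h : MapClusterPt x F u) (h' : Tendsto u F (nhds y)) : x = y := by
  have hb : (nhds x ⊓ Filter.map u F).NeBot := h
  exact eq_of_nhds_neBot (hb.mono (inf_le_inf_left _ h'))

private lemma aux_log_lower {x : ℝ} (h0 : 0 ≤ x) (h1 : x ≤ 1) : x / 2 ≤ Real.log (1 + x) := by
  rw [Real.le_log_iff_exp_le (by linarith)]
  have h2 := Real.add_one_le_exp (-(x / 2))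
  rw [Real.exp_neg] at h2
  have hE := Real.exp_pos (x / 2)
  have h3 : Real.exp (x / 2) * (1 - x / 2) ≤ 1 := by
    calc Real.exp (x / 2) * (1 - x / 2) ≤ Real.exp (x / 2) * (Real.exp (x / 2))⁻¹ := by
          apply mul_le_mul_of_nonneg_left (by linarith) hE.le
      _ = 1 := mul_inv_cancel₀ hE.ne'
  nlinarith

private lemma aux_one_sub_exp_sum {ι : Type*} [DecidableEq ι] (s : Finset ι) (u : ι → ℝ)
    (hu : ∀ i ∈ s, 0 ≤ u i) :
    1 - Real.exp (-∑ i ∈ s, u i) ≤ ∑ i ∈ s, (1 - Real.exp (-u i)) := by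
  induction s using Finset.induction with
  | empty => simp
  | @insert a s ha ih =>
    rw [Finset.sum_insert ha, Finset.sum_insert ha]
    have hS : 0 ≤ ∑ i ∈ s, u i := Finset.sum_nonneg fun i hi => hu i (Finset.mem_insert_of_mem hi)
    have ha0 : 0 ≤ u a := hu a (Finset.mem_insert_self a s)
    have ih' := ih fun i hi => hu i (Finset.mem_insert_of_mem hi)
    have e1 : Real.exp (-u a) ≤ 1 := Real.exp_le_one_iff.mpr (by linarith)
    have e2 : Real.exp (-∑ i ∈ s, u i) ≤ 1 := Real.exp_le_one_iff.mpr (by linarith)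
    have e3 : Real.exp (-(u a + ∑ i ∈ s, u i)) = Real.exp (-u a) * Real.exp (-∑ i ∈ s, u i) := by
      rw [← Real.exp_add]; ring_nf
    have p1 := Real.exp_pos (-u a); have p2 := Real.exp_pos (-∑ i ∈ s, u i)
    nlinarith

theorem statement_16
    (n k : ℕ) (hn : 0 < n) (L : ℝ) (hL : 0 < L)
    (p : Fin n → EuclideanSpace ℝ (Fin k) → ℝ)
    (hp : ∀ i, ContDiff ℝ 1 (p i))
    (hhom : ∀ i (c : ℝ), 0 < c → ∀ V, p i (c • V) = c ^ L * p i V)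
    (ℓ : ℝ → ℝ)
    (hℓ : ℓ = (fun z => Real.exp (-z)) ∨ ℓ = fun z => Real.log (1 + Real.exp (-z)))
    (𝓛 : EuclideanSpace ℝ (Fin k) → ℝ)
    (h𝓛 : 𝓛 = fun V => ∑ i, ℓ (p i V))
    (α : EuclideanSpace ℝ (Fin k) → ℝ)
    (hα : α = fun V => Function.invFun ℓ (𝓛 V))
    (W : ℝ → EuclideanSpace ℝ (Fin k))
    (hW : ∀ t : ℝ, 0 ≤ t → HasDerivAt W (-gradient 𝓛 (W t)) t)
    (hinit : 𝓛 (W 0) < ℓ 0)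
    (hWnorm : Tendsto (fun t => ‖W t‖) atTop atTop)
    (Wbar : EuclideanSpace ℝ (Fin k))
    (hdir : Tendsto (fun t => ‖W t‖⁻¹ • W t) atTop (nhds Wbar))
    (a : ℝ) (ha : 0 < a)
    (halpha : Tendsto (fun t => α (W t) / ‖W t‖ ^ L) atTop (nhds a))
    (q : Fin n → ℝ → ℝ)
    (hq : ∀ i t, q i t = deriv ℓ (p i (W t)) / deriv ℓ (α (W t))) :
    (∀ i, Tendsto (fun t => p i (W t) / ‖W t‖ ^ L) atTop (nhds (p i Wbar))) ∧
    (⨅ i, p i Wbar) = a ∧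
    ∀ qbar : Fin n → ℝ,
      MapClusterPt qbar atTop (fun t : ℕ => fun i => q i t) →
        (∀ i, 0 ≤ qbar i) ∧ (∑ i, qbar i) = 1 ∧
        (∑ i, qbar i * ⟪Wbar, gradient (p i) Wbar⟫) = a * L ∧
        (∀ i, qbar i ≠ 0 → p i Wbar = a) := by
  have hne : Nonempty (Fin n) := Fin.pos_iff_nonempty.mp hn
  have hnR : (0:ℝ) < n := by exact_mod_cast hn
  have hn2 : (1:ℝ) ≤ 2 * n := by
    have : (1:ℝ) ≤ (n:ℝ) := by exact_mod_cast hn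
    linarith
  -- basic facts about ℓ
  have hpos : ∀ z, 0 < ℓ z := by
    rcases hℓ with hℓ | hℓ <;> subst hℓ <;> intro z
    · exact Real.exp_pos _
    · exact Real.log_pos (by linarith [Real.exp_pos (-z)])
  have hanti : StrictAnti ℓ := by
    rcases hℓ with hℓ | hℓ <;> subst hℓ <;> intro x y hxy
    · exact Real.exp_lt_exp.mpr (by linarith)
    · exact Real.log_lt_log (by linarith [Real.exp_pos (-y)])
        (by linarith [Real.exp_lt_exp.mpr (neg_lt_neg hxy)])
  have hsur : ∀ y : ℝ, 0 < y → ∃ z, ℓ z = y := by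
    rcases hℓ with hℓ | hℓ <;> subst hℓ <;> intro y hy
    · refine ⟨-Real.log y, ?_⟩
      show Real.exp (-(-Real.log y)) = y
      rw [neg_neg, Real.exp_log hy]
    · have h1 : 0 < Real.exp y - 1 := by linarith [Real.add_one_le_exp y]
      refine ⟨-Real.log (Real.exp y - 1), ?_⟩
      show Real.log (1 + Real.exp (-(-Real.log (Real.exp y - 1)))) = y
      rw [neg_neg, Real.exp_log h1]
      rw [show (1 : ℝ) + (Real.exp y - 1) = Real.exp y by ring, Real.log_exp]
  have hlim0 : Tendsto ℓ atTop (nhds 0) := by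
    rcases hℓ with hℓ | hℓ <;> subst hℓ
    · exact Real.tendsto_exp_atBot.comp tendsto_neg_atTop_atBot
    · have h1 : Tendsto (fun z : ℝ => 1 + Real.exp (-z)) atTop (nhds 1) := by
        have := tendsto_const_nhds (x := (1:ℝ)) (f := atTop (α := ℝ))
        simpa using this.add (Real.tendsto_exp_atBot.comp tendsto_neg_atTop_atBot)
      have := (Real.continuousAt_log one_ne_zero).tendsto.comp h1
      simpa [Function.comp_def] using this
  have hkey : ∀ z w : ℝ, 0 ≤ z → ℓ z ≤ n * ℓ w → w ≤ z + Real.log (2 * n) := by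
    have key : ∀ z w : ℝ, Real.exp (-z) ≤ 2 * n * Real.exp (-w) → w ≤ z + Real.log (2 * n) := by
      intro z w h2
      have hew := Real.exp_pos (-w)
      have hmul : Real.exp (w - z) * Real.exp (-w) = Real.exp (-z) := by
        rw [← Real.exp_add]; ring_nf
      have h3 : Real.exp (w - z) ≤ 2 * n :=
        le_of_mul_le_mul_right (by rw [hmul]; exact h2) hew
      have h4 : w - z ≤ Real.log (2 * n) := (Real.le_log_iff_exp_le (by linarith)).mpr h3
      linarith
    rcases hℓ with hℓ | hℓ <;> subst hℓ <;> intro z w hz h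
    · refine key z w ?_
      have := Real.exp_pos (-w)
      nlinarith
    · have hlow : Real.exp (-z) / 2 ≤ Real.log (1 + Real.exp (-z)) :=
        aux_log_lower (Real.exp_pos _).le (Real.exp_le_one_iff.mpr (by linarith))
      have hup : Real.log (1 + Real.exp (-w)) ≤ Real.exp (-w) := by
        have := Real.log_le_sub_one_of_pos (show (0:ℝ) < 1 + Real.exp (-w) by positivity)
        linarith
      refine key z w ?_
      nlinarith
  -- the identity ℓ (α V) = 𝓛 V
  have h𝓛pos : ∀ V, 0 < 𝓛 V := fun V => by
    rw [h𝓛]; exact Finset.sum_pos (fun i _ => hpos _) Finset.univ_nonempty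
  have hℓα : ∀ V, ℓ (α V) = 𝓛 V := by
    intro V
    obtain ⟨z, hz⟩ := hsur _ (h𝓛pos V)
    rw [hα]; simp only
    rw [← hz, Function.leftInverse_invFun hanti.injective, hz]
  have hαle : ∀ V i, α V ≤ p i V := by
    intro V i
    have h1 : ℓ (p i V) ≤ ℓ (α V) := by
      rw [hℓα V]; simp only [h𝓛]
      exact Finset.single_le_sum (f := fun j => ℓ (p j V)) (fun j _ => (hpos _).le) (Finset.mem_univ i)
    exact hanti.le_iff_ge.mp h1
  have hminex : ∀ V, 0 ≤ α V → ∃ i, p i V ≤ α V + Real.log (2 * n) := by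
    intro V hV
    have hsum : ∑ _i : Fin n, (ℓ (α V) / n) ≤ ∑ i, ℓ (p i V) := by
      rw [Finset.sum_const, Finset.card_univ, Fintype.card_fin, nsmul_eq_mul,
        mul_div_cancel₀ _ (by exact_mod_cast hn.ne')]
      rw [hℓα V]; simp only [h𝓛]; exact le_rfl
    obtain ⟨i, _, hi⟩ := Finset.exists_le_of_sum_le Finset.univ_nonempty hsum
    rw [div_le_iff₀ hnR] at hi
    exact ⟨i, hkey (α V) (p i V) hV (by linarith)⟩
  -- norm facts
  have hNtop : Tendsto (fun t => ‖W t‖ ^ L) atTop atTop :=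
    (tendsto_rpow_atTop hL).comp hWnorm
  have hNpos : ∀ᶠ t in atTop, (0:ℝ) < ‖W t‖ := hWnorm.eventually_gt_atTop 0
  have hAtop : Tendsto (fun t => α (W t)) atTop atTop := by
    have h1 : Tendsto (fun t => (α (W t) / ‖W t‖ ^ L) * ‖W t‖ ^ L) atTop atTop :=
      halpha.pos_mul_atTop ha hNtop
    refine h1.congr' ?_
    filter_upwards [hNpos] with t ht
    rw [div_mul_cancel₀ _ (by positivity : (0:ℝ) < ‖W t‖ ^ L).ne']
  have hA0 : ∀ᶠ t in atTop, (0:ℝ) ≤ α (W t) := hAtop.eventually_ge_atTop 0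
  -- Part 1
  have hpart1 : ∀ i, Tendsto (fun t => p i (W t) / ‖W t‖ ^ L) atTop (nhds (p i Wbar)) := by
    intro i
    have h1 : Tendsto (fun t => p i (‖W t‖⁻¹ • W t)) atTop (nhds (p i Wbar)) :=
      ((hp i).continuous.tendsto Wbar).comp hdir
    refine h1.congr' ?_
    filter_upwards [hNpos] with t ht
    rw [hhom i _ (by positivity) (W t), Real.inv_rpow (norm_nonneg _), inv_mul_eq_div]
  -- Part 2
  have h2a : ∀ i, a ≤ p i Wbar := by
    intro i
    refine le_of_tendsto_of_tendsto halpha (hpart1 i) ?_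
    filter_upwards [hNpos] with t ht
    exact (div_le_div_iff_of_pos_right (by positivity)).mpr (hαle (W t) i)
  have hinf : (⨅ i, p i Wbar) = a := by
    refine le_antisymm ?_ (le_ciInf h2a)
    by_contra hcon
    push_neg at hcon
    set b := ⨅ i, p i Wbar with hb
    set ε := (b - a) / 2 with hε
    have hεpos : 0 < ε := by simp only [hε]; linarith
    have hbl : ∀ i, b ≤ p i Wbar := fun i => ciInf_le (Set.finite_range _).bddBelow i
    have ev1 : ∀ᶠ t in atTop, ∀ i, a + ε < p i (W t) / ‖W t‖ ^ L := by
      rw [eventually_all]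
      intro i
      exact (hpart1 i).eventually_const_lt (by have := hbl i; simp only [hε]; linarith)
    have ev2 : ∀ᶠ t in atTop, α (W t) / ‖W t‖ ^ L < a + ε / 2 :=
      halpha.eventually_lt_const (by linarith)
    have ev3 : ∀ᶠ t in atTop, Real.log (2 * n) / ‖W t‖ ^ L < ε / 2 :=
      (tendsto_const_nhds.div_atTop hNtop).eventually_lt_const (by linarith)
    obtain ⟨t, h1, h2, h3, h4, h5⟩ := (ev1.and (ev2.and (ev3.and (hA0.and hNpos)))).exists
    obtain ⟨i, hi⟩ := hminex (W t) h4
    have hNt : (0:ℝ) < ‖W t‖ ^ L := by positivity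
    have h6 : p i (W t) / ‖W t‖ ^ L ≤ α (W t) / ‖W t‖ ^ L + Real.log (2 * n) / ‖W t‖ ^ L := by
      rw [← add_div]
      exact (div_le_div_iff_of_pos_right hNt).mpr hi
    have := h1 i
    linarith
  refine ⟨hpart1, hinf, ?_⟩
  -- derivative sign
  have hexpD : ∀ z : ℝ, HasDerivAt (fun z : ℝ => Real.exp (-z)) (-Real.exp (-z)) z := fun z => by
    simpa [Function.comp_def] using (Real.hasDerivAt_exp (-z)).comp z ((hasDerivAt_id z).neg)
  have hD : ∀ z, deriv ℓ z < 0 := by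
    rcases hℓ with hℓ | hℓ <;> intro z <;> rw [hℓ]
    · rw [(hexpD z).deriv]
      exact neg_lt_zero.mpr (Real.exp_pos _)
    · have hpos1 : (0:ℝ) < 1 + Real.exp (-z) := by positivity
      rw [(((hexpD z).const_add 1).log hpos1.ne').deriv]
      exact div_neg_of_neg_of_pos (neg_lt_zero.mpr (Real.exp_pos _)) hpos1
  have hqpos : ∀ i t, 0 < q i t := fun i t => by
    rw [hq i t]; exact div_pos_of_neg_of_neg (hD _) (hD _)
  -- bounds on q
  have hqb : ∀ t : ℝ, 0 ≤ α (W t) →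
      ((1:ℝ) ≤ ∑ i, q i t ∧ ∑ i, q i t ≤ Real.exp (ℓ (α (W t)))) ∧
      ∀ i, q i t ≤ 2 * Real.exp (-(p i (W t) - α (W t))) := by
    have hsval : ∀ t, ℓ (α (W t)) = ∑ i, ℓ (p i (W t)) := fun t => by
      rw [hℓα]; simp only [h𝓛]
    rcases hℓ with hℓ' | hℓ' <;> intro t hAt
    · -- exponential loss
      have hd : ∀ z : ℝ, deriv ℓ z = -ℓ z := fun z => by
        rw [hℓ']; exact (hexpD z).deriv
      have hsum : ∑ i, q i t = 1 := by
        have h1 : ∀ i, q i t = ℓ (p i (W t)) / ℓ (α (W t)) := fun i => by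
          rw [hq i t, hd, hd, neg_div_neg_eq]
        rw [Finset.sum_congr rfl fun i _ => h1 i, ← Finset.sum_div, ← hsval t,
          div_self (hpos _).ne']
      refine ⟨⟨hsum.ge, ?_⟩, ?_⟩
      · rw [hsum]; exact Real.one_le_exp (hpos _).le
      · intro i
        have h1 : q i t = ℓ (p i (W t)) / ℓ (α (W t)) := by
          rw [hq i t, hd, hd, neg_div_neg_eq]
        rw [h1, hℓ']
        have h2 : Real.exp (-p i (W t)) / Real.exp (-α (W t))
            = Real.exp (-(p i (W t) - α (W t))) := by
          rw [← Real.exp_sub]; ring_nf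
        rw [h2]
        nlinarith [Real.exp_pos (-(p i (W t) - α (W t)))]
    · -- logistic loss
      have hpos1 : ∀ z : ℝ, (0:ℝ) < 1 + Real.exp (-z) := fun z => by positivity
      have hdraw : ∀ z : ℝ, deriv ℓ z = -Real.exp (-z) / (1 + Real.exp (-z)) := fun z => by
        rw [hℓ']; exact (((hexpD z).const_add 1).log (hpos1 z).ne').deriv
      have hd : ∀ z : ℝ, deriv ℓ z = -(1 - Real.exp (-ℓ z)) := by
        intro z
        rw [hdraw z, hℓ']
        simp only
        rw [show Real.exp (-Real.log (1 + Real.exp (-z))) = (1 + Real.exp (-z))⁻¹ by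
          rw [Real.exp_neg, Real.exp_log (hpos1 z)]]
        field_simp
        ring
      have hq' : ∀ i, q i t
          = (1 - Real.exp (-ℓ (p i (W t)))) / (1 - Real.exp (-ℓ (α (W t)))) := fun i => by
        rw [hq i t, hd, hd, neg_div_neg_eq]
      have hden : 0 < 1 - Real.exp (-ℓ (α (W t))) := by
        have := Real.exp_lt_one_iff.mpr (neg_lt_zero.mpr (hpos (α (W t))))
        linarith
      have hsum_eq : ∑ i, q i t
          = (∑ i, (1 - Real.exp (-ℓ (p i (W t))))) / (1 - Real.exp (-ℓ (α (W t)))) := by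
        rw [Finset.sum_congr rfl fun i _ => hq' i, ← Finset.sum_div]
      constructor
      · constructor
        · rw [hsum_eq, le_div_iff₀ hden, one_mul]
          have h1 := aux_one_sub_exp_sum Finset.univ (fun i => ℓ (p i (W t)))
            (fun i _ => (hpos _).le)
          rw [← hsval t] at h1
          exact h1
        · rw [hsum_eq, div_le_iff₀ hden]
          have h1 : ∑ i, (1 - Real.exp (-ℓ (p i (W t)))) ≤ ℓ (α (W t)) := by
            rw [hsval t]
            refine Finset.sum_le_sum fun i _ => ?_
            have := Real.add_one_le_exp (-ℓ (p i (W t)))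
            linarith
          have h3 : Real.exp (ℓ (α (W t))) * Real.exp (-ℓ (α (W t))) = 1 := by
            rw [← Real.exp_add]; simp
          have h4 := Real.add_one_le_exp (ℓ (α (W t)))
          nlinarith
      · intro i
        rw [hq i t, div_le_iff_of_neg (hD (α (W t))), hdraw, hdraw]
        set x := Real.exp (-p i (W t)) with hx
        set y := Real.exp (-α (W t)) with hy
        have hxp : 0 < x := Real.exp_pos _
        have hyp : 0 < y := Real.exp_pos _
        have hy1 : y ≤ 1 := Real.exp_le_one_iff.mpr (by linarith)
        have hE : Real.exp (-(p i (W t) - α (W t))) = x / y := by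
          rw [hx, hy, ← Real.exp_sub]; ring_nf
        rw [hE]
        have h1 : 2 * (x / y) * (-y / (1 + y)) = -(2 * x / (1 + y)) := by
          field_simp
        rw [h1]
        have h2 : x / (1 + x) ≤ 2 * x / (1 + y) := by
          rw [div_le_div_iff₀ (by linarith) (by linarith)]
          nlinarith
        have h3 : -x / (1 + x) = -(x / (1 + x)) := by ring
        rw [h3]
        linarith
  -- sum of dual variables tends to 1
  have hs0 : Tendsto (fun t => ℓ (α (W t))) atTop (nhds 0) := hlim0.comp hAtop
  have hsumq : Tendsto (fun t : ℝ => ∑ i, q i t) atTop (nhds 1) := by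
    have hup : Tendsto (fun t : ℝ => Real.exp (ℓ (α (W t)))) atTop (nhds 1) := by
      have := (Real.continuous_exp.tendsto 0).comp hs0
      simpa [Function.comp_def] using this
    refine tendsto_of_tendsto_of_tendsto_of_le_of_le' tendsto_const_nhds hup ?_ ?_
    · filter_upwards [hA0] with t ht using ((hqb t ht).1).1
    · filter_upwards [hA0] with t ht using ((hqb t ht).1).2
  -- Euler's homogeneous function theorem
  have hEuler : ∀ i, ⟪Wbar, gradient (p i) Wbar⟫ = L * p i Wbar := by
    intro i
    have hdiff : DifferentiableAt ℝ (p i) Wbar := ((hp i).differentiable one_ne_zero).differentiableAt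
    have hf : HasDerivAt (fun c : ℝ => c • Wbar) Wbar 1 := by
      simpa using (hasDerivAt_id (1:ℝ)).smul_const Wbar
    have h1 : HasDerivAt (fun c : ℝ => p i (c • Wbar)) (fderiv ℝ (p i) Wbar Wbar) 1 := by
      have h0 : HasFDerivAt (p i) (fderiv ℝ (p i) Wbar) ((1:ℝ) • Wbar) := by
        rw [one_smul]; exact hdiff.hasFDerivAt
      exact h0.comp_hasDerivAt 1 hf
    have h2 : HasDerivAt (fun c : ℝ => c ^ L * p i Wbar) (L * p i Wbar) 1 := by
      have h := (Real.hasDerivAt_rpow_const (x := (1:ℝ)) (p := L)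
        (Or.inl one_ne_zero)).mul_const (p i Wbar)
      simpa [Real.one_rpow] using h
    have h3 : (fun c : ℝ => p i (c • Wbar)) =ᶠ[nhds (1:ℝ)] fun c => c ^ L * p i Wbar := by
      filter_upwards [eventually_gt_nhds zero_lt_one] with c hc using hhom i c hc Wbar
    have h4 : fderiv ℝ (p i) Wbar Wbar = L * p i Wbar :=
      h1.unique (h2.congr_of_eventuallyEq h3)
    rw [real_inner_comm]
    rw [show gradient (p i) Wbar = (InnerProductSpace.toDual ℝ _).symm (fderiv ℝ (p i) Wbar)
      from rfl, InnerProductSpace.toDual_symm_apply]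
    exact h4
  intro qbar hclus
  have hcomp : ∀ i, MapClusterPt (qbar i) atTop (fun m : ℕ => q i (m : ℝ)) := fun i =>
    hclus.continuousAt_comp (continuous_apply i).continuousAt
  have hzero_of : ∀ i, a < p i Wbar → qbar i = 0 := by
    intro i hlt
    have hdtop : Tendsto (fun t => p i (W t) - α (W t)) atTop atTop := by
      have h1 : Tendsto (fun t => ‖W t‖ ^ L * (p i (W t) / ‖W t‖ ^ L - α (W t) / ‖W t‖ ^ L))
          atTop atTop := hNtop.atTop_mul_pos (sub_pos.2 hlt) ((hpart1 i).sub halpha)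
      refine h1.congr' ?_
      filter_upwards [hNpos] with t ht
      have hNt : (‖W t‖ ^ L) ≠ 0 := by positivity
      field_simp
    have hupper : Tendsto (fun t : ℝ => 2 * Real.exp (-(p i (W t) - α (W t))))
        atTop (nhds 0) := by
      have h2 : Tendsto (fun t : ℝ => Real.exp (-(p i (W t) - α (W t)))) atTop (nhds 0) :=
        Real.tendsto_exp_atBot.comp (tendsto_neg_atTop_atBot.comp hdtop)
      simpa using h2.const_mul 2
    have hq0 : Tendsto (fun t : ℝ => q i t) atTop (nhds 0) := by
      refine tendsto_of_tendsto_of_tendsto_of_le_of_le' tendsto_const_nhds hupper ?_ ?_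
      · filter_upwards with t using (hqpos i t).le
      · filter_upwards [hA0] with t ht using (hqb t ht).2 i
    exact aux_clusterPt_eq (hcomp i) (hq0.comp tendsto_natCast_atTop_atTop)
  have hsupp : ∀ i, qbar i ≠ 0 → p i Wbar = a := by
    intro i hne0
    by_contra hpa
    exact hne0 (hzero_of i (lt_of_le_of_ne (h2a i) (Ne.symm hpa)))
  have hqnn : ∀ i, 0 ≤ qbar i := by
    intro i
    by_contra hlt
    push_neg at hlt
    obtain ⟨m, hm⟩ := (mapClusterPt_iff_frequently.mp (hcomp i) (Set.Iio 0) (Iio_mem_nhds hlt)).exists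
    exact absurd hm (not_lt.mpr (hqpos i m).le)
  have hsum1 : (∑ i, qbar i) = 1 := by
    have hcont : Continuous (fun v : Fin n → ℝ => ∑ i, v i) :=
      continuous_finset_sum _ fun i _ => continuous_apply i
    have hc : MapClusterPt (∑ i, qbar i) atTop (fun m : ℕ => ∑ i, q i (m : ℝ)) :=
      hclus.continuousAt_comp hcont.continuousAt
    exact aux_clusterPt_eq hc (hsumq.comp tendsto_natCast_atTop_atTop)
  refine ⟨hqnn, hsum1, ?_, hsupp⟩
  have h1 : ∀ i, qbar i * ⟪Wbar, gradient (p i) Wbar⟫ = qbar i * (L * a) := by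
    intro i
    by_cases h : qbar i = 0
    · rw [h, zero_mul, zero_mul]
    · rw [hEuler i, hsupp i h]
  rw [Finset.sum_congr rfl fun i _ => h1 i, ← Finset.sum_mul, hsum1, one_mul]
  ring
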